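/- For all real numbers x, y with 0 ≤ y < x ≤ 2, one has tanh(x/2) · tanh(y/2) ≤ tanh(xy/4). -/

import Mathlib

open Real

private lemma tanh_hasDerivAt (x : ℝ) :
    HasDerivAt Real.tanh (1 / Real.cosh x ^ 2) x := by
  have h : Real.tanh = fun x => Real.sinh x / Real.cosh x := by
    funext t; exact Real.tanh_eq_sinh_div_cosh t
  rw [h]
  have := (Real.hasDerivAt_sinh x).div (Real.hasDerivAt_cosh x)
    (ne_of_gt (Real.cosh_pos x))
  refine this.congr_deriv ?_
  congr 1
  nlinarith [Real.cosh_sq_sub_sinh_sq x]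

private lemma tanh_deriv : deriv Real.tanh = fun x => 1 / Real.cosh x ^ 2 := by
  funext x; exact (tanh_hasDerivAt x).deriv

private lemma tanh_diff : Differentiable ℝ Real.tanh :=
  fun x => (tanh_hasDerivAt x).differentiableAt

private lemma tanh_mono : Monotone Real.tanh := by
  apply monotone_of_deriv_nonneg
  · exact fun x => (tanh_hasDerivAt x).differentiableAt
  · intro x
    rw [tanh_deriv]
    positivity

private lemma tanh_le_self {t : ℝ} (ht : 0 ≤ t) : Real.tanh t ≤ t := by
  have hg : MonotoneOn (fun s => s - Real.tanh s) (Set.Ici 0) := by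
    apply monotoneOn_of_deriv_nonneg (convex_Ici 0)
    · exact (continuous_id.sub tanh_diff.continuous).continuousOn
    · exact (differentiable_id.sub tanh_diff).differentiableOn
    · intro s _
      have : deriv (fun s => s - Real.tanh s) s = 1 - 1 / Real.cosh s ^ 2 := by
        rw [deriv_fun_sub (differentiableAt_fun_id (x := s)) (tanh_hasDerivAt s).differentiableAt,
          deriv_id'', (tanh_hasDerivAt s).deriv]
      rw [this]
      have h1 : (1 : ℝ) ≤ Real.cosh s := Real.one_le_cosh s
      have h2 : (1 : ℝ) ≤ Real.cosh s ^ 2 := one_le_pow₀ h1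
      have := Real.cosh_pos s
      rw [sub_nonneg, div_le_one (by positivity)]
      exact h2
  have := hg (Set.self_mem_Ici) (Set.mem_Ici.mpr ht) ht
  simpa [Real.tanh_zero] using this

private lemma tanh_nonneg {t : ℝ} (ht : 0 ≤ t) : 0 ≤ Real.tanh t := by
  have := tanh_mono ht
  simpa [Real.tanh_zero] using this

private lemma tanh_le_one (t : ℝ) : Real.tanh t ≤ 1 := by
  rw [Real.tanh_eq_sinh_div_cosh, div_le_one (Real.cosh_pos t)]
  exact (Real.sinh_lt_cosh t).le

private lemma key {l t : ℝ} (hl0 : 0 ≤ l) (hl1 : l ≤ 1) (ht : 0 ≤ t) :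
    l * Real.tanh t ≤ Real.tanh (l * t) := by
  have hg : MonotoneOn (fun s => Real.tanh (l * s) - l * Real.tanh s) (Set.Ici 0) := by
    have hd : ∀ s : ℝ, HasDerivAt (fun s => Real.tanh (l * s) - l * Real.tanh s)
        (1 / Real.cosh (l * s) ^ 2 * l - l * (1 / Real.cosh s ^ 2)) s := by
      intro s
      have := ((tanh_hasDerivAt (l * s)).comp s ((hasDerivAt_id s).const_mul l)).sub
        ((tanh_hasDerivAt s).const_mul l)
      simpa [Function.comp, mul_one, Pi.sub_def] using this
    apply monotoneOn_of_deriv_nonneg (convex_Ici 0)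
    · exact Continuous.continuousOn
        ((tanh_diff.continuous.comp (continuous_const.mul continuous_id)).sub
          (continuous_const.mul tanh_diff.continuous))
    · intro s _
      exact (hd s).differentiableAt.differentiableWithinAt
    · intro s hs
      rw [(hd s).deriv]
      have hs0 : 0 ≤ s := le_of_lt (by simpa using hs)
      have hc1 : Real.cosh (l * s) ≤ Real.cosh s := by
        rw [Real.cosh_le_cosh, abs_of_nonneg (mul_nonneg hl0 hs0), abs_of_nonneg hs0]
        nlinarith
      have hcp1 := Real.cosh_pos (l * s)
      have hcp2 := Real.cosh_pos s
      have : 1 / Real.cosh s ^ 2 ≤ 1 / Real.cosh (l * s) ^ 2 := by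
        apply one_div_le_one_div_of_le (by positivity)
        nlinarith
      nlinarith
  have := hg (Set.self_mem_Ici) (Set.mem_Ici.mpr ht) ht
  simp only [mul_zero, Real.tanh_zero, sub_zero, sub_nonneg] at this
  linarith [this]

theorem tanh_prod_le_tanh (x y : ℝ) (hy : 0 ≤ y) (hyx : y < x) (hx : x ≤ 2) :
    Real.tanh (x / 2) * Real.tanh (y / 2) ≤ Real.tanh (x * y / 4) := by
  have hx0 : 0 ≤ x / 2 := by linarith
  have hty0 : 0 ≤ Real.tanh (y / 2) := tanh_nonneg (by linarith)
  have hty1 : Real.tanh (y / 2) ≤ 1 := tanh_le_one _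
  have h1 : Real.tanh (y / 2) * Real.tanh (x / 2) ≤ Real.tanh (Real.tanh (y / 2) * (x / 2)) :=
    key hty0 hty1 hx0
  have h2 : Real.tanh (Real.tanh (y / 2) * (x / 2)) ≤ Real.tanh (x * y / 4) := by
    apply tanh_mono
    have := tanh_le_self (show (0:ℝ) ≤ y / 2 by linarith)
    nlinarith
  linarith [mul_comm (Real.tanh (x / 2)) (Real.tanh (y / 2))]
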